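/- For all integers n ≥ 1 and k, j ≥ 0, the number of set partitions of [2(n+k+j)+2] with no singleton blocks such that, in the standard representation, vertices 1,…,n+k are openers, vertex n+k+1 is a transitory, the next k vertices are closers, the next j vertices are openers, the following vertex is a transitory, and the last n+j vertices are closers, equals n! · ( binom(n+k, k) · k! · k + binom(n+k, k+1) · (k+1)! ) · ( binom(n+j, j) · j! · j + binom(n+j, j+1) · (j+1)! ). -/

import Mathlib

/-- The set of arc endpoints of a collection of arcs. -/
def Endpoints (M : Finset (ℕ × ℕ)) : Finset ℕ := M.image Prod.fst ∪ M.image Prod.snd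

/-- A partial matching of `[N] = {1,…,N}`: a set of arcs `(i,j)` with
`1 ≤ i < j ≤ N` whose entries are pairwise disjoint. -/
def IsPartialMatching (N : ℕ) (M : Finset (ℕ × ℕ)) : Prop :=
  (∀ p ∈ M, 1 ≤ p.1 ∧ p.1 < p.2 ∧ p.2 ≤ N) ∧
  (∀ p ∈ M, ∀ q ∈ M, p ≠ q → p.1 ≠ q.1 ∧ p.1 ≠ q.2 ∧ p.2 ≠ q.1 ∧ p.2 ≠ q.2)

/-- A perfect matching of `[N]`: a partial matching whose arcs cover `{1,…,N}`. -/
def IsPerfectMatching (N : ℕ) (M : Finset (ℕ × ℕ)) : Prop :=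
  IsPartialMatching N M ∧ Endpoints M = Finset.Icc 1 N

/-- `A` is a `k`-crossing of `M`: a `k`-element subset of arcs listable as
`(i₁,j₁),…,(i_k,j_k)` with `i₁ < ⋯ < i_k < j₁ < ⋯ < j_k`. -/
def IsCrossing (k : ℕ) (M A : Finset (ℕ × ℕ)) : Prop :=
  A ⊆ M ∧ A.card = k ∧ (∀ p ∈ A, ∀ q ∈ A, p.1 < q.1 → p.2 < q.2) ∧
    (∀ p ∈ A, ∀ q ∈ A, p.1 < q.2)

/-- `A` is a `k`-nesting of `M`: a `k`-element subset of arcs listable as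
`(i₁,j₁),…,(i_k,j_k)` with `i₁ < ⋯ < i_k < j_k < ⋯ < j₁`. -/
def IsNesting (k : ℕ) (M A : Finset (ℕ × ℕ)) : Prop :=
  A ⊆ M ∧ A.card = k ∧ (∀ p ∈ A, ∀ q ∈ A, p.1 < q.1 → q.2 < p.2)

/-- `crNum k M` : the number of `k`-crossings of `M`. -/
noncomputable def crNum (k : ℕ) (M : Finset (ℕ × ℕ)) : ℕ :=
  Nat.card {A : Finset (ℕ × ℕ) // IsCrossing k M A}

/-- `neNum k M` : the number of `k`-nestings of `M`. -/
noncomputable def neNum (k : ℕ) (M : Finset (ℕ × ℕ)) : ℕ :=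
  Nat.card {A : Finset (ℕ × ℕ) // IsNesting k M A}

/-- The four types of vertices in the standard representation of a set partition. -/
inductive VType
  | opener | closer | transitory | fixedpt
deriving DecidableEq

/-- The arc set of the standard representation of a set partition `P` of `{1,…,N}`:
arcs join consecutive elements of a block. -/
def spArcs {N : ℕ} (P : Finpartition (Finset.Icc (1 : ℕ) N)) : Finset (ℕ × ℕ) :=
  ((Finset.Icc (1 : ℕ) N) ×ˢ (Finset.Icc (1 : ℕ) N)).filter fun q =>
    q.1 < q.2 ∧ ∃ B ∈ P.parts, q.1 ∈ B ∧ q.2 ∈ B ∧ ∀ x ∈ B, ¬(q.1 < x ∧ x < q.2)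

/-- The type of the vertex `i` in the standard representation of `P`. -/
def vtype {N : ℕ} (P : Finpartition (Finset.Icc (1 : ℕ) N)) (i : ℕ) : VType :=
  if i ∈ (spArcs P).image Prod.fst then
    (if i ∈ (spArcs P).image Prod.snd then VType.transitory else VType.opener)
  else
    (if i ∈ (spArcs P).image Prod.snd then VType.closer else VType.fixedpt)

/-- The (1-based) rank of `i` inside the finite set `E`. -/
def rankIn (E : Finset ℕ) (i : ℕ) : ℕ := (E.filter fun x => x ≤ i).card

open Finset

lemma count_nested : ∀ (m : ℕ) (A : Fin m → Finset ℕ),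
    (∀ i i' : Fin m, i ≤ i' → A i ⊆ A i') →
    ((Fintype.piFinset A).filter (fun f => ∀ i i', f i = f i' → i = i')).card
      = ∏ i : Fin m, ((A i).card - (i : ℕ))
  | 0, A, _ => by
    rw [Finset.filter_true_of_mem (fun f _ => fun i i' _ => Subsingleton.elim i i')]
    simp [Fintype.card_piFinset]
  | (m+1), A, hA => by
    classical
    have key : (Fintype.piFinset A).filter (fun f => ∀ i i', f i = f i' → i = i') =
        (A 0).biUnion (fun a =>
          ((Fintype.piFinset (fun i : Fin m => (A i.succ).erase a)).filter
            (fun f => ∀ i i', f i = f i' → i = i')).image (fun f => (Fin.cons a f : Fin (m+1) → ℕ))) := by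
      ext f
      simp only [Finset.mem_filter, Fintype.mem_piFinset, Finset.mem_biUnion, Finset.mem_image,
        Finset.mem_erase]
      constructor
      · rintro ⟨hmem, hinj⟩
        refine ⟨f 0, hmem 0, Fin.tail f, ⟨fun i => ⟨?_, hmem i.succ⟩, ?_⟩, ?_⟩
        · intro h
          exact (Fin.succ_ne_zero i) (hinj _ _ h)
        · intro i i' h
          exact Fin.succ_injective _ (hinj _ _ h)
        · exact Fin.cons_self_tail f
      · rintro ⟨a, ha, f', ⟨hmem, hinj⟩, rfl⟩
        refine ⟨fun i => ?_, fun i i' h => ?_⟩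
        · refine Fin.cases ?_ (fun i => ?_) i
          · simpa using ha
          · simpa using (hmem i).2
        · revert h
          refine Fin.cases ?_ (fun i0 => ?_) i <;> refine Fin.cases ?_ (fun i1 => ?_) i' <;>
            simp only [Fin.cons_succ, Fin.cons_zero] <;> intro h
          · exact trivial
          · exact absurd h.symm (hmem i1).1
          · exact absurd h (hmem i0).1
          · exact congrArg Fin.succ (hinj _ _ h)
    rw [key, Finset.card_biUnion]
    · have hcard : ∀ a ∈ A 0,
          (((Fintype.piFinset (fun i : Fin m => (A i.succ).erase a)).filter
            (fun f => ∀ i i', f i = f i' → i = i')).image (fun f => (Fin.cons a f : Fin (m+1) → ℕ))).card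
          = ∏ i : Fin m, ((A i.succ).card - (i : ℕ) - 1) := by
        intro a ha
        rw [Finset.card_image_of_injective _ ((Fin.cons_right_injective (α := fun _ : Fin (m+1) => ℕ) a)),
          count_nested m _ (fun i i' hle => Finset.erase_subset_erase a
            (hA i.succ i'.succ (Fin.succ_le_succ_iff.2 hle)))]
        refine Finset.prod_congr rfl (fun i _ => ?_)
        rw [Finset.card_erase_of_mem (hA 0 i.succ (Fin.zero_le _) ha)]
        omega
      rw [Finset.sum_congr rfl hcard, Finset.sum_const, smul_eq_mul, Fin.prod_univ_succ]
      simp only [Fin.val_zero, Nat.sub_zero, Fin.val_succ]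
      refine congrArg _ (Finset.prod_congr rfl (fun i _ => ?_))
      omega
    · intro a ha b hb hab
      simp only [Function.onFun, Finset.disjoint_left]
      intro f hf hg
      simp only [Finset.mem_image] at hf hg
      obtain ⟨f1, _, rfl⟩ := hf
      obtain ⟨f2, _, h2⟩ := hg
      have := congrFun h2 0
      simp only [Fin.cons_zero] at this
      exact hab (this ▸ rfl)

def eL (n k j i : ℕ) : ℕ := (if i ≤ j then n+2*k+j+2 else n+k+j+2) - i
def Lset (n k j : ℕ) : Finset ℕ :=
  Finset.Icc 1 (n+k+1) ∪ Finset.Icc (n+2*k+2) (n+2*k+j+2)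
def Rset (n k j : ℕ) : Finset ℕ :=
  Finset.Icc (n+k+1) (n+2*k+1) ∪ Finset.Icc (n+2*k+j+2) (2*(n+k+j)+2)
def Aset (n k j i : ℕ) : Finset ℕ := (Rset n k j).filter (fun r => eL n k j i < r)

lemma filter_Icc_lt (a b c : ℕ) :
    (Finset.Icc a b).filter (fun x => c < x) = Finset.Icc (max a (c+1)) b := by
  ext x; simp only [Finset.mem_filter, Finset.mem_Icc, max_le_iff]; omega

lemma Aset_card (n k j i : ℕ) :
    (Aset n k j i).card = (n+2*k+2 - max (n+k+1) (eL n k j i + 1))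
      + (2*(n+k+j)+3 - max (n+2*k+j+2) (eL n k j i + 1)) := by
  rw [Aset, Rset, Finset.filter_union, filter_Icc_lt, filter_Icc_lt,
    Finset.card_union_of_disjoint, Nat.card_Icc, Nat.card_Icc]
  · simp only [Finset.disjoint_left, Finset.mem_Icc]
    intro x h1 h2; omega

lemma prod_Aset (n k j : ℕ) :
    ∏ i : Fin (n+k+j+2), ((Aset n k j (i : ℕ)).card - (i : ℕ))
      = ((n+j) * (n+j).descFactorial j) * ((n+k) * Nat.factorial (n+k)) := by
  rw [Fin.prod_univ_eq_prod_range (fun i => (Aset n k j i).card - i) (n+k+j+2)]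
  have hval : ∀ i ∈ Finset.range (n+k+j+2), (Aset n k j i).card - i =
      (if i = 0 then n + j else if i ≤ j then n+j+1-i else
        if i = j+1 then n+k else n+k+j+2-i) := by
    intro i hi
    rw [Finset.mem_range] at hi
    rw [Aset_card, eL]
    split_ifs <;> omega
  rw [Finset.prod_congr rfl hval]
  rw [Finset.range_eq_Ico, ← Finset.prod_Ico_consecutive _ (Nat.zero_le (j+2)) (by omega : j+2 ≤ n+k+j+2),
    ← Finset.prod_Ico_consecutive _ (Nat.zero_le 1) (by omega : 1 ≤ j+2),
    ← Finset.prod_Ico_consecutive _ (by omega : (1:ℕ) ≤ j+1) (by omega : j+1 ≤ j+2)]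
  have h0 : ∏ i ∈ Finset.Ico 0 1, (if i = 0 then n + j else if i ≤ j then n+j+1-i else
      if i = j+1 then n+k else n+k+j+2-i) = n + j := by simp
  have h1 : ∏ i ∈ Finset.Ico 1 (j+1), (if i = 0 then n + j else if i ≤ j then n+j+1-i else
      if i = j+1 then n+k else n+k+j+2-i) = (n+j).descFactorial j := by
    rw [Finset.prod_Ico_eq_prod_range, Nat.descFactorial_eq_prod_range]
    have hr : j + 1 - 1 = j := by omega
    rw [hr]
    refine Finset.prod_congr rfl (fun i hi => ?_)
    rw [Finset.mem_range] at hi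
    have : ¬(1 + i = 0) := by omega
    have h2 : 1 + i ≤ j := by omega
    simp only [this, if_false, h2, if_true]
    omega
  have h2 : ∏ i ∈ Finset.Ico (j+1) (j+2), (if i = 0 then n + j else if i ≤ j then n+j+1-i else
      if i = j+1 then n+k else n+k+j+2-i) = n + k := by
    simp
  have h3 : ∏ i ∈ Finset.Ico (j+2) (n+k+j+2), (if i = 0 then n + j else if i ≤ j then n+j+1-i else
      if i = j+1 then n+k else n+k+j+2-i) = Nat.factorial (n+k) := by
    rw [Finset.prod_Ico_eq_prod_range, ← Nat.descFactorial_self (n+k), Nat.descFactorial_eq_prod_range]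
    have hr : n + k + j + 2 - (j + 2) = n + k := by omega
    rw [hr]
    refine Finset.prod_congr rfl (fun i hi => ?_)
    rw [Finset.mem_range] at hi
    have ha : ¬(j + 2 + i = 0) := by omega
    have hb : ¬(j + 2 + i ≤ j) := by omega
    have hc : ¬(j + 2 + i = j+1) := by omega
    simp only [ha, hb, hc, if_false]
    omega
  rw [h0, h1, h2, h3]
  ring

section Abstract

variable (N t1 t2 : ℕ) (L R : Finset ℕ)

structure GoodLR : Prop where
  hLR : L ∪ R = Finset.Icc 1 N
  hI : L ∩ R = {t1, t2}
  h12 : t1 < t2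
  hLt2 : ∀ x ∈ L, x ≤ t2
  hRt1 : ∀ r ∈ R, t1 ≤ r
  hcard : L.card = R.card

def Gcond (g : ℕ → ℕ) : Prop :=
  (∀ x ∈ L, g x ∈ R ∧ x < g x) ∧ (∀ x ∉ L, g x = 0) ∧ Set.InjOn g ↑L

def typeOf (i : ℕ) : VType :=
  if i ∈ L then (if i ∈ R then VType.transitory else VType.opener) else VType.closer

def Pcond {N : ℕ} (L R : Finset ℕ) (P : Finpartition (Finset.Icc (1 : ℕ) N)) : Prop :=
  ∀ i ∈ Finset.Icc (1 : ℕ) N, vtype P i = typeOf L R i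

/-- the block (chain) of the pure opener `o` -/
def chainF (g : ℕ → ℕ) (o : ℕ) : Finset ℕ :=
  if g o = t1 then (if g t1 = t2 then {o, t1, t2, g t2} else {o, t1, g t1})
  else if g o = t2 then {o, t2, g t2} else {o, g o}

lemma mem_chainF (g : ℕ → ℕ) (o y : ℕ) :
    y ∈ chainF t1 t2 g o ↔ (y = o ∨ y = g o) ∨
      ((g o = t1 ∧ y = g t1) ∨ (((g o = t1 ∧ g t1 = t2) ∨ g o = t2) ∧ y = g t2)) := by
  unfold chainF
  split_ifs <;>
    simp only [Finset.mem_insert, Finset.mem_singleton] <;> aesop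

section WithHyp

variable {N t1 t2 : ℕ} {L R : Finset ℕ} {g : ℕ → ℕ}

lemma t1_mem (hy : GoodLR N t1 t2 L R) : t1 ∈ L ∧ t1 ∈ R := by
  have : t1 ∈ L ∩ R := by rw [hy.hI]; simp
  exact ⟨(Finset.mem_inter.1 this).1, (Finset.mem_inter.1 this).2⟩

lemma t2_mem (hy : GoodLR N t1 t2 L R) : t2 ∈ L ∧ t2 ∈ R := by
  have : t2 ∈ L ∩ R := by rw [hy.hI]; simp
  exact ⟨(Finset.mem_inter.1 this).1, (Finset.mem_inter.1 this).2⟩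

lemma L_sub (hy : GoodLR N t1 t2 L R) : L ⊆ Finset.Icc 1 N := by
  rw [← hy.hLR]; exact Finset.subset_union_left

lemma R_sub (hy : GoodLR N t1 t2 L R) : R ⊆ Finset.Icc 1 N := by
  rw [← hy.hLR]; exact Finset.subset_union_right

lemma mem_t1t2 (hy : GoodLR N t1 t2 L R) {x : ℕ} (hxL : x ∈ L) (hxR : x ∈ R) : x = t1 ∨ x = t2 := by
  have : x ∈ L ∩ R := Finset.mem_inter.2 ⟨hxL, hxR⟩
  rw [hy.hI] at this
  simpa using this

lemma g_image (hy : GoodLR N t1 t2 L R) (hg : Gcond L R g) : L.image g = R := by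
  apply Finset.eq_of_subset_of_card_le
  · intro y hy'
    obtain ⟨x, hx, rfl⟩ := Finset.mem_image.1 hy'
    exact (hg.1 x hx).1
  · rw [Finset.card_image_of_injOn hg.2.2, hy.hcard]

lemma g_surj (hy : GoodLR N t1 t2 L R) (hg : Gcond L R g) {r : ℕ} (hr : r ∈ R) : ∃ x ∈ L, g x = r := by
  have := (g_image hy hg) ▸ hr
  simpa [Finset.mem_image] using this

lemma g_t2_not_mem (hy : GoodLR N t1 t2 L R) (hg : Gcond L R g) : g t2 ∉ L := by
  intro h
  have h1 := hy.hLt2 _ h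
  have h2 := (hg.1 t2 (t2_mem hy).1).2
  omega

lemma not_eq_g (hg : Gcond L R g) {o x : ℕ} (ho : o ∈ L \ R) (hx : x ∈ L) : o ≠ g x := by
  intro h
  exact (Finset.mem_sdiff.1 ho).2 (h ▸ (hg.1 x hx).1)

lemma g_inj (hg : Gcond L R g) {x x' : ℕ} (hx : x ∈ L) (hx' : x' ∈ L) (h : g x = g x') : x = x' :=
  hg.2.2 hx hx' h

lemma pure_ne_t1 (hy : GoodLR N t1 t2 L R) {o : ℕ} (ho : o ∈ L \ R) : o ≠ t1 := by
  intro h; exact (Finset.mem_sdiff.1 ho).2 (h ▸ (t1_mem hy).2)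

lemma pure_ne_t2 (hy : GoodLR N t1 t2 L R) {o : ℕ} (ho : o ∈ L \ R) : o ≠ t2 := by
  intro h; exact (Finset.mem_sdiff.1 ho).2 (h ▸ (t2_mem hy).2)

lemma chainF_disj (hy : GoodLR N t1 t2 L R) (hg : Gcond L R g) {o o' : ℕ} (ho : o ∈ L \ R) (ho' : o' ∈ L \ R) (hne : o ≠ o') :
    Disjoint (chainF t1 t2 g o) (chainF t1 t2 g o') := by
  have hoL := (Finset.mem_sdiff.1 ho).1
  have hoL' := (Finset.mem_sdiff.1 ho').1
  have ht1L := (t1_mem hy).1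
  have ht2L := (t2_mem hy).1
  rw [Finset.disjoint_left]
  intro y hyo hyo'
  rw [mem_chainF] at hyo hyo'
  apply hne
  rcases hyo with (rfl | rfl) | (⟨e1, rfl⟩ | ⟨c1, rfl⟩) <;>
    rcases hyo' with (h' | h') | (⟨e1', h'⟩ | ⟨c1', h'⟩)
  · exact h'
  · exact absurd h' (not_eq_g hg ho hoL')
  · exact absurd h' (not_eq_g hg ho ht1L)
  · exact absurd h' (not_eq_g hg ho ht2L)
  · exact absurd h'.symm (not_eq_g hg ho' hoL)
  · exact g_inj hg hoL hoL' h'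
  · exact absurd (g_inj hg hoL ht1L h') (pure_ne_t1 hy ho)
  · exact absurd (g_inj hg hoL ht2L h') (pure_ne_t2 hy ho)
  · exact absurd h'.symm (not_eq_g hg ho' ht1L)
  · exact absurd (g_inj hg hoL' ht1L h'.symm) (pure_ne_t1 hy ho')
  · rw [← e1'] at e1; exact g_inj hg hoL hoL' e1
  · exact absurd (g_inj hg ht1L ht2L h') (Nat.ne_of_lt hy.h12)
  · exact absurd h'.symm (not_eq_g hg ho' ht2L)
  · exact absurd (g_inj hg hoL' ht2L h'.symm) (pure_ne_t2 hy ho')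
  · exact absurd (g_inj hg ht1L ht2L h'.symm).symm (Nat.ne_of_lt' hy.h12)
  · -- both chains end with g t2
    rcases c1 with ⟨e1, e2⟩ | e3 <;> rcases c1' with ⟨e1', e2'⟩ | e3'
    · rw [← e1'] at e1; exact g_inj hg hoL hoL' e1
    · rw [← e3'] at e2; exact absurd (g_inj hg ht1L hoL' e2).symm (pure_ne_t1 hy ho')
    · rw [← e3] at e2'; exact absurd (g_inj hg ht1L hoL e2').symm (pure_ne_t1 hy ho)
    · rw [← e3'] at e3; exact g_inj hg hoL hoL' e3

lemma chainF_subset_Icc (hy : GoodLR N t1 t2 L R) (hg : Gcond L R g) {o : ℕ} (ho : o ∈ L \ R) : chainF t1 t2 g o ⊆ Finset.Icc 1 N := by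
  intro y hy'
  rw [mem_chainF] at hy'
  have hoL := (Finset.mem_sdiff.1 ho).1
  rcases hy' with (rfl | rfl) | (⟨_, rfl⟩ | ⟨_, rfl⟩)
  · exact L_sub hy hoL
  · exact R_sub hy ((hg.1 o hoL).1)
  · exact R_sub hy ((hg.1 t1 (t1_mem hy).1).1)
  · exact R_sub hy ((hg.1 t2 (t2_mem hy).1).1)

lemma exists_pure_chain (hy : GoodLR N t1 t2 L R) (hg : Gcond L R g) {a : ℕ} (ha : a ∈ R) :
    ∃ o ∈ L \ R, a ∈ chainF t1 t2 g o := by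
  obtain ⟨x, hxL, hgx⟩ := g_surj hy hg ha
  by_cases hxR : x ∈ R
  · rcases mem_t1t2 hy hxL hxR with rfl | rfl
    · -- a = g t1
      obtain ⟨x0, hx0L, hg0⟩ := g_surj hy hg (t1_mem hy).2
      have hx0p : x0 ∈ L \ R := by
        rw [Finset.mem_sdiff]
        refine ⟨hx0L, fun hR => ?_⟩
        have := hy.hRt1 _ hR
        have := (hg.1 x0 hx0L).2
        omega
      exact ⟨x0, hx0p, (mem_chainF _ _ _ _ _).2 (Or.inr (Or.inl ⟨hg0, hgx.symm⟩))⟩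
    · -- a = g t2
      obtain ⟨x1, hx1L, hg1⟩ := g_surj hy hg (t2_mem hy).2
      by_cases hx1R : x1 ∈ R
      · rcases mem_t1t2 hy hx1L hx1R with rfl | rfl
        · -- g t1 = t2
          obtain ⟨x0, hx0L, hg0⟩ := g_surj hy hg (t1_mem hy).2
          have hx0p : x0 ∈ L \ R := by
            rw [Finset.mem_sdiff]
            refine ⟨hx0L, fun hR => ?_⟩
            have := hy.hRt1 _ hR
            have := (hg.1 x0 hx0L).2
            omega
          exact ⟨x0, hx0p, (mem_chainF _ _ _ _ _).2
            (Or.inr (Or.inr ⟨Or.inl ⟨hg0, hg1⟩, hgx.symm⟩))⟩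
        · have hlt := (hg.1 x1 hx1L).2
          omega
      · exact ⟨x1, Finset.mem_sdiff.2 ⟨hx1L, hx1R⟩,
          (mem_chainF _ _ _ _ _).2 (Or.inr (Or.inr ⟨Or.inr hg1, hgx.symm⟩))⟩
  · exact ⟨x, Finset.mem_sdiff.2 ⟨hxL, hxR⟩,
      (mem_chainF _ _ _ _ _).2 (Or.inl (Or.inr hgx.symm))⟩

def PofG (hy : GoodLR N t1 t2 L R) (hg : Gcond L R g) : Finpartition (Finset.Icc (1 : ℕ) N) where
  parts := (L \ R).image (chainF t1 t2 g)
  supIndep := by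
    rw [Finset.supIndep_iff_pairwiseDisjoint]
    intro B hB B' hB' hne
    rw [Finset.mem_coe, Finset.mem_image] at hB hB'
    obtain ⟨o, ho, rfl⟩ := hB
    obtain ⟨o', ho', rfl⟩ := hB'
    have : o ≠ o' := fun h => hne (by rw [h])
    exact chainF_disj hy hg ho ho' this
  sup_parts := by
    apply Finset.ext
    intro a
    rw [Finset.mem_sup]
    constructor
    · rintro ⟨B, hB, haB⟩
      rw [Finset.mem_image] at hB
      obtain ⟨o, ho, rfl⟩ := hB
      exact chainF_subset_Icc hy hg ho haB
    · intro haI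
      rw [← hy.hLR, Finset.mem_union] at haI
      rcases haI with haL | haR
      · by_cases haR : a ∈ R
        · obtain ⟨o, ho, hmem⟩ := exists_pure_chain hy hg haR
          exact ⟨_, Finset.mem_image_of_mem _ ho, hmem⟩
        · refine ⟨_, Finset.mem_image_of_mem _ (Finset.mem_sdiff.2 ⟨haL, haR⟩), ?_⟩
          exact (mem_chainF _ _ _ _ _).2 (Or.inl (Or.inl rfl))
      · obtain ⟨o, ho, hmem⟩ := exists_pure_chain hy hg haR
        exact ⟨_, Finset.mem_image_of_mem _ ho, hmem⟩
  bot_notMem := by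
    rw [Finset.bot_eq_empty, Finset.mem_image]
    rintro ⟨o, ho, h⟩
    have : o ∈ chainF t1 t2 g o := (mem_chainF _ _ _ _ _).2 (Or.inl (Or.inl rfl))
    rw [h] at this
    exact absurd this (Finset.notMem_empty o)

lemma lt_g (hg : Gcond L R g) {x : ℕ} (hx : x ∈ L) : x < g x := (hg.1 x hx).2

lemma g_R (hg : Gcond L R g) {x : ℕ} (hx : x ∈ L) : g x ∈ R := (hg.1 x hx).1

lemma exists_pure_pre_t1 (hy : GoodLR N t1 t2 L R) (hg : Gcond L R g) :
    ∃ x0, x0 ∈ L \ R ∧ g x0 = t1 := by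
  obtain ⟨x0, hx0L, hg0⟩ := g_surj hy hg (t1_mem hy).2
  refine ⟨x0, Finset.mem_sdiff.2 ⟨hx0L, fun hR => ?_⟩, hg0⟩
  have := hy.hRt1 _ hR
  have := (hg.1 x0 hx0L).2
  omega

lemma parts_PofG (hy : GoodLR N t1 t2 L R) (hg : Gcond L R g) :
    (PofG hy hg).parts = (L \ R).image (chainF t1 t2 g) := rfl

lemma mem_spArcs_PofG (hy : GoodLR N t1 t2 L R) (hg : Gcond L R g) {a b : ℕ} :
    (a, b) ∈ spArcs (PofG hy hg) ↔ a ∈ L ∧ b = g a := by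
  have ht1L := (t1_mem hy).1
  have ht2L := (t2_mem hy).1
  simp only [spArcs, Finset.mem_filter, Finset.mem_product]
  simp only [parts_PofG]
  constructor
  · rintro ⟨-, hab, B, hB, haB, hbB, hbtw⟩
    obtain ⟨o, ho, rfl⟩ := Finset.mem_image.1 hB
    have hoL := (Finset.mem_sdiff.1 ho).1
    by_cases h1 : g o = t1
    · by_cases h2 : g t1 = t2
      · rw [chainF, if_pos h1, if_pos h2] at haB hbB hbtw
        simp only [Finset.mem_insert, Finset.mem_singleton] at haB hbB
        have f1 : o < t1 := h1 ▸ lt_g hg hoL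
        have f2 : t1 < t2 := hy.h12
        have f3 : t2 < g t2 := lt_g hg ht2L
        have b1 := hbtw t1 (by simp)
        have b2 := hbtw t2 (by simp)
        have key : (a = o ∧ b = t1) ∨ (a = t1 ∧ b = t2) ∨ (a = t2 ∧ b = g t2) := by
          omega
        rcases key with ⟨rfl, rfl⟩ | ⟨rfl, rfl⟩ | ⟨rfl, rfl⟩
        · exact ⟨hoL, h1.symm⟩
        · exact ⟨ht1L, h2.symm⟩
        · exact ⟨ht2L, rfl⟩
      · rw [chainF, if_pos h1, if_neg h2] at haB hbB hbtw
        simp only [Finset.mem_insert, Finset.mem_singleton] at haB hbB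
        have f1 : o < t1 := h1 ▸ lt_g hg hoL
        have f3 : t1 < g t1 := lt_g hg ht1L
        have b1 := hbtw t1 (by simp)
        have key : (a = o ∧ b = t1) ∨ (a = t1 ∧ b = g t1) := by omega
        rcases key with ⟨rfl, rfl⟩ | ⟨rfl, rfl⟩
        · exact ⟨hoL, h1.symm⟩
        · exact ⟨ht1L, rfl⟩
    · by_cases h3 : g o = t2
      · rw [chainF, if_neg h1, if_pos h3] at haB hbB hbtw
        simp only [Finset.mem_insert, Finset.mem_singleton] at haB hbB
        have f1 : o < t2 := h3 ▸ lt_g hg hoL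
        have f3 : t2 < g t2 := lt_g hg ht2L
        have b1 := hbtw t2 (by simp)
        have key : (a = o ∧ b = t2) ∨ (a = t2 ∧ b = g t2) := by omega
        rcases key with ⟨rfl, rfl⟩ | ⟨rfl, rfl⟩
        · exact ⟨hoL, h3.symm⟩
        · exact ⟨ht2L, rfl⟩
      · rw [chainF, if_neg h1, if_neg h3] at haB hbB hbtw
        simp only [Finset.mem_insert, Finset.mem_singleton] at haB hbB
        have f1 : o < g o := lt_g hg hoL
        have key : a = o ∧ b = g o := by omega
        rcases key with ⟨rfl, rfl⟩
        exact ⟨hoL, rfl⟩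
  · rintro ⟨haL, rfl⟩
    refine ⟨⟨L_sub hy haL, R_sub hy (g_R hg haL)⟩, lt_g hg haL, ?_⟩
    by_cases haR : a ∈ R
    · rcases mem_t1t2 hy haL haR with h | h <;> rw [h]
      · -- a = t1
        obtain ⟨x0, hx0, hg0⟩ := exists_pure_pre_t1 hy hg
        have hx0L := (Finset.mem_sdiff.1 hx0).1
        refine ⟨chainF t1 t2 g x0, Finset.mem_image_of_mem _ hx0, ?_, ?_, ?_⟩
        · exact (mem_chainF _ _ _ _ _).2 (Or.inl (Or.inr hg0.symm))
        · exact (mem_chainF _ _ _ _ _).2 (Or.inr (Or.inl ⟨hg0, rfl⟩))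
        · intro x hx
          by_cases h2 : g t1 = t2
          · rw [chainF, if_pos hg0, if_pos h2] at hx
            simp only [Finset.mem_insert, Finset.mem_singleton] at hx
            have f1 : x0 < t1 := hg0 ▸ lt_g hg hx0L
            have f2 : t1 < t2 := hy.h12
            have f3 : t2 < g t2 := lt_g hg ht2L
            rw [h2]
            omega
          · rw [chainF, if_pos hg0, if_neg h2] at hx
            simp only [Finset.mem_insert, Finset.mem_singleton] at hx
            have f1 : x0 < t1 := hg0 ▸ lt_g hg hx0L
            omega
      · -- a = t2
        obtain ⟨x1, hx1L, hg1⟩ := g_surj hy hg (t2_mem hy).2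
        by_cases hx1R : x1 ∈ R
        · have hgt : g t1 = t2 := by
            rcases mem_t1t2 hy hx1L hx1R with h1 | h1
            · rw [← h1]; exact hg1
            · exfalso; have := lt_g hg hx1L; rw [hg1, h1] at this; omega
          obtain ⟨x0, hx0, hg0⟩ := exists_pure_pre_t1 hy hg
          have hx0L := (Finset.mem_sdiff.1 hx0).1
          refine ⟨chainF t1 t2 g x0, Finset.mem_image_of_mem _ hx0, ?_, ?_, ?_⟩
          · exact (mem_chainF _ _ _ _ _).2 (Or.inr (Or.inl ⟨hg0, hgt.symm⟩))
          · exact (mem_chainF _ _ _ _ _).2 (Or.inr (Or.inr ⟨Or.inl ⟨hg0, hgt⟩, rfl⟩))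
          · intro x hx
            rw [chainF, if_pos hg0, if_pos hgt] at hx
            simp only [Finset.mem_insert, Finset.mem_singleton] at hx
            have f1 : x0 < t1 := hg0 ▸ lt_g hg hx0L
            have f2 : t1 < t2 := hy.h12
            have f3 : t2 < g t2 := lt_g hg ht2L
            omega
        · refine ⟨chainF t1 t2 g x1, Finset.mem_image_of_mem _
            (Finset.mem_sdiff.2 ⟨hx1L, hx1R⟩), ?_, ?_, ?_⟩
          · exact (mem_chainF _ _ _ _ _).2 (Or.inl (Or.inr hg1.symm))
          · exact (mem_chainF _ _ _ _ _).2 (Or.inr (Or.inr ⟨Or.inr hg1, rfl⟩))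
          · intro x hx
            have hg1t1 : ¬ (g x1 = t1) := by rw [hg1]; have := hy.h12; omega
            rw [chainF, if_neg hg1t1, if_pos hg1] at hx
            simp only [Finset.mem_insert, Finset.mem_singleton] at hx
            have f1 : x1 < t2 := hg1 ▸ lt_g hg hx1L
            have f3 : t2 < g t2 := lt_g hg ht2L
            omega
    · -- a pure opener
      have hap : a ∈ L \ R := Finset.mem_sdiff.2 ⟨haL, haR⟩
      refine ⟨chainF t1 t2 g a, Finset.mem_image_of_mem _ hap, ?_, ?_, ?_⟩
      · exact (mem_chainF _ _ _ _ _).2 (Or.inl (Or.inl rfl))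
      · exact (mem_chainF _ _ _ _ _).2 (Or.inl (Or.inr rfl))
      · intro x hx
        have f0 : a < g a := lt_g hg haL
        by_cases h1 : g a = t1
        · by_cases h2 : g t1 = t2
          · rw [chainF, if_pos h1, if_pos h2] at hx
            simp only [Finset.mem_insert, Finset.mem_singleton] at hx
            have f2 : t1 < t2 := hy.h12
            have f3 : t2 < g t2 := lt_g hg ht2L
            rw [h1]
            omega
          · rw [chainF, if_pos h1, if_neg h2] at hx
            simp only [Finset.mem_insert, Finset.mem_singleton] at hx
            have f3 : t1 < g t1 := lt_g hg ht1L
            rw [h1]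
            omega
        · by_cases h3 : g a = t2
          · rw [chainF, if_neg h1, if_pos h3] at hx
            simp only [Finset.mem_insert, Finset.mem_singleton] at hx
            have f3 : t2 < g t2 := lt_g hg ht2L
            rw [h3]
            omega
          · rw [chainF, if_neg h1, if_neg h3] at hx
            simp only [Finset.mem_insert, Finset.mem_singleton] at hx
            omega

lemma spArcs_PofG_fst (hy : GoodLR N t1 t2 L R) (hg : Gcond L R g) :
    (spArcs (PofG hy hg)).image Prod.fst = L := by
  ext a
  simp only [Finset.mem_image, Prod.exists]
  constructor
  · rintro ⟨x, b, hmem, rfl⟩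
    exact ((mem_spArcs_PofG hy hg).1 hmem).1
  · intro ha
    exact ⟨a, g a, (mem_spArcs_PofG hy hg).2 ⟨ha, rfl⟩, rfl⟩

lemma spArcs_PofG_snd (hy : GoodLR N t1 t2 L R) (hg : Gcond L R g) :
    (spArcs (PofG hy hg)).image Prod.snd = R := by
  ext b
  simp only [Finset.mem_image, Prod.exists]
  constructor
  · rintro ⟨x, b, hmem, rfl⟩
    obtain ⟨hxL, rfl⟩ := (mem_spArcs_PofG hy hg).1 hmem
    exact g_R hg hxL
  · intro hb
    obtain ⟨x, hxL, rfl⟩ := g_surj hy hg hb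
    exact ⟨x, g x, (mem_spArcs_PofG hy hg).2 ⟨hxL, rfl⟩, rfl⟩

lemma Pcond_PofG (hy : GoodLR N t1 t2 L R) (hg : Gcond L R g) :
    Pcond L R (PofG hy hg) := by
  intro i hi
  rw [vtype, spArcs_PofG_fst hy hg, spArcs_PofG_snd hy hg, typeOf]
  by_cases hiL : i ∈ L
  · simp [hiL]
  · have hiR : i ∈ R := by
      rw [← hy.hLR, Finset.mem_union] at hi
      tauto
    simp [hiL, hiR]

-- spArcs basics for arbitrary partitions
lemma mem_spArcs {N : ℕ} {P : Finpartition (Finset.Icc (1:ℕ) N)} {a b : ℕ} :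
    (a, b) ∈ spArcs P ↔ (a ∈ Finset.Icc 1 N ∧ b ∈ Finset.Icc 1 N) ∧ a < b ∧
      ∃ B ∈ P.parts, a ∈ B ∧ b ∈ B ∧ ∀ x ∈ B, ¬(a < x ∧ x < b) := by
  rw [spArcs, Finset.mem_filter, Finset.mem_product]

lemma succ_unique {N : ℕ} {P : Finpartition (Finset.Icc (1:ℕ) N)} {a b b' : ℕ}
    (h : (a, b) ∈ spArcs P) (h' : (a, b') ∈ spArcs P) : b = b' := by
  obtain ⟨-, hab, B, hB, haB, hbB, hbtw⟩ := mem_spArcs.1 h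
  obtain ⟨-, hab', B', hB', haB', hbB', hbtw'⟩ := mem_spArcs.1 h'
  have hBB : B = B' := P.eq_of_mem_parts hB hB' haB haB'
  subst hBB
  rcases lt_trichotomy b b' with hlt | heq | hlt
  · exact absurd ⟨hab, hlt⟩ (hbtw' b hbB)
  · exact heq
  · exact absurd ⟨hab', hlt⟩ (hbtw b' hbB')

lemma pred_unique {N : ℕ} {P : Finpartition (Finset.Icc (1:ℕ) N)} {a a' b : ℕ}
    (h : (a, b) ∈ spArcs P) (h' : (a', b) ∈ spArcs P) : a = a' := by
  obtain ⟨-, hab, B, hB, haB, hbB, hbtw⟩ := mem_spArcs.1 h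
  obtain ⟨-, hab', B', hB', haB', hbB', hbtw'⟩ := mem_spArcs.1 h'
  have hBB : B = B' := P.eq_of_mem_parts hB hB' hbB hbB'
  subst hBB
  rcases lt_trichotomy a a' with hlt | heq | hlt
  · exact absurd ⟨hlt, hab'⟩ (hbtw a' haB')
  · exact heq
  · exact absurd ⟨hlt, hab⟩ (hbtw' a haB)

open Classical in
noncomputable def gOf {N : ℕ} (P : Finpartition (Finset.Icc (1:ℕ) N)) : ℕ → ℕ :=
  fun x => if h : ∃ b, (x, b) ∈ spArcs P then h.choose else 0

lemma gOf_eq {N : ℕ} {P : Finpartition (Finset.Icc (1:ℕ) N)} {x b : ℕ}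
    (h : (x, b) ∈ spArcs P) : gOf P x = b := by
  classical
  rw [gOf]
  have he : ∃ b, (x, b) ∈ spArcs P := ⟨b, h⟩
  rw [dif_pos he]
  exact succ_unique he.choose_spec h

lemma gOf_zero {N : ℕ} {P : Finpartition (Finset.Icc (1:ℕ) N)} {x : ℕ}
    (h : ¬∃ b, (x, b) ∈ spArcs P) : gOf P x = 0 := by
  classical
  rw [gOf, dif_neg h]

section Pside

variable {P : Finpartition (Finset.Icc (1:ℕ) N)}

lemma arc_of_mem_L (hy : GoodLR N t1 t2 L R) (hP : Pcond L R P) {x : ℕ} (hx : x ∈ L) :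
    (x, gOf P x) ∈ spArcs P := by
  have hxI : x ∈ Finset.Icc 1 N := L_sub hy hx
  have hv := hP x hxI
  by_cases hfst : x ∈ (spArcs P).image Prod.fst
  · obtain ⟨p, hp, hpx⟩ := Finset.mem_image.1 hfst
    have : (x, p.2) ∈ spArcs P := by rwa [← hpx, Prod.mk.eta]
    rwa [gOf_eq this]
  · exfalso
    rw [vtype, if_neg hfst, typeOf, if_pos hx] at hv
    split_ifs at hv <;> simp_all

lemma mem_R_of_snd (hy : GoodLR N t1 t2 L R) (hP : Pcond L R P) {a b : ℕ}
    (h : (a, b) ∈ spArcs P) : b ∈ R := by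
  have hbI : b ∈ Finset.Icc 1 N := (mem_spArcs.1 h).1.2
  have hv := hP b hbI
  have hsnd : b ∈ (spArcs P).image Prod.snd := Finset.mem_image.2 ⟨(a, b), h, rfl⟩
  by_cases hbL : b ∈ L
  · by_cases hbR : b ∈ R
    · exact hbR
    · exfalso
      rw [vtype, typeOf, if_pos hbL, if_neg hbR] at hv
      split_ifs at hv <;> simp_all
  · rw [← hy.hLR, Finset.mem_union] at hbI
    tauto

lemma Gcond_gOf (hy : GoodLR N t1 t2 L R) (hP : Pcond L R P) : Gcond L R (gOf P) := by
  refine ⟨fun x hx => ?_, fun x hx => ?_, fun x hx x' hx' hgg => ?_⟩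
  · have harc := arc_of_mem_L hy hP hx
    exact ⟨mem_R_of_snd hy hP harc, (mem_spArcs.1 harc).2.1⟩
  · apply gOf_zero
    rintro ⟨b, hb⟩
    have hxI : x ∈ Finset.Icc 1 N := (mem_spArcs.1 hb).1.1
    have hv := hP x hxI
    have hfst : x ∈ (spArcs P).image Prod.fst := Finset.mem_image.2 ⟨(x, b), hb, rfl⟩
    rw [vtype, if_pos hfst, typeOf, if_neg hx] at hv
    split_ifs at hv <;> simp_all
  · rw [Finset.mem_coe] at hx hx'
    have h1 := arc_of_mem_L hy hP hx
    have h2 := arc_of_mem_L hy hP hx'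
    rw [hgg] at h1
    exact pred_unique h1 h2

lemma block_pred (hB : B ∈ P.parts) {y : ℕ} (hy' : y ∈ B) (hex : ∃ z ∈ B, z < y) :
    ∃ x ∈ B, (x, y) ∈ spArcs P := by
  classical
  have hne : (B.filter (fun z => z < y)).Nonempty := by
    obtain ⟨z, hz, hzy⟩ := hex
    exact ⟨z, Finset.mem_filter.2 ⟨hz, hzy⟩⟩
  set x := (B.filter (fun z => z < y)).max' hne with hx
  have hxmem := (B.filter (fun z => z < y)).max'_mem hne
  rw [Finset.mem_filter] at hxmem
  refine ⟨x, hxmem.1, mem_spArcs.2 ⟨⟨P.le hB hxmem.1, P.le hB hy'⟩, hxmem.2,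
    B, hB, hxmem.1, hy', fun z hz hzb => ?_⟩⟩
  have : z ∈ B.filter (fun z => z < y) := Finset.mem_filter.2 ⟨hz, hzb.2⟩
  have := Finset.le_max' _ z this
  omega

lemma snd_in_block (hB : B ∈ P.parts) {x b : ℕ} (h : (x, b) ∈ spArcs P)
    (hx : x ∈ B) : b ∈ B := by
  obtain ⟨-, -, B', hB', hxB', hbB', -⟩ := mem_spArcs.1 h
  rwa [P.eq_of_mem_parts hB hB' hx hxB']

lemma trans_mem (hy : GoodLR N t1 t2 L R) (hP : Pcond L R P) {u v w : ℕ}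
    (h1 : (u, v) ∈ spArcs P) (h2 : (w, u) ∈ spArcs P) : u = t1 ∨ u = t2 := by
  have huI : u ∈ Finset.Icc 1 N := (mem_spArcs.1 h1).1.1
  have hv := hP u huI
  have hfst : u ∈ (spArcs P).image Prod.fst := Finset.mem_image.2 ⟨(u, v), h1, rfl⟩
  have hsnd : u ∈ (spArcs P).image Prod.snd := Finset.mem_image.2 ⟨(w, u), h2, rfl⟩
  rw [vtype, if_pos hfst, if_pos hsnd, typeOf] at hv
  split_ifs at hv with hL hR
  exact mem_t1t2 hy hL hR

lemma part_eq_chain (hy : GoodLR N t1 t2 L R) (hP : Pcond L R P) {B : Finset ℕ}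
    (hB : B ∈ P.parts) : ∃ o ∈ L \ R, B = chainF t1 t2 (gOf P) o := by
  have hgc : Gcond L R (gOf P) := Gcond_gOf hy hP
  have hne : B.Nonempty := P.nonempty_of_mem_parts hB
  set o := B.min' hne with ho_def
  have hoB : o ∈ B := B.min'_mem hne
  have hoI : o ∈ Finset.Icc 1 N := P.le hB hoB
  have hnosnd : o ∉ (spArcs P).image Prod.snd := by
    intro hmem
    obtain ⟨p, hp, hp2⟩ := Finset.mem_image.1 hmem
    have harc : (p.1, o) ∈ spArcs P := by rwa [← hp2, Prod.mk.eta]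
    obtain ⟨-, hlt, B', hB', h1B, h2B, -⟩ := mem_spArcs.1 harc
    have hBB : B' = B := P.eq_of_mem_parts hB' hB h2B hoB
    subst hBB
    have := B'.min'_le _ h1B
    omega
  have hv := hP o hoI
  rw [vtype, if_neg hnosnd, if_neg hnosnd, typeOf] at hv
  have hoLR : o ∈ L \ R := by
    split_ifs at hv with h1 h2 h3
    exact Finset.mem_sdiff.2 ⟨h2, h3⟩
  have hoL : o ∈ L := (Finset.mem_sdiff.1 hoLR).1
  have ht1L := (t1_mem hy).1
  have ht2L := (t2_mem hy).1
  refine ⟨o, hoLR, Finset.Subset.antisymm ?_ ?_⟩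
  · -- B ⊆ chain o
    intro y hyB
    rw [mem_chainF]
    by_cases hyo : y = o
    · exact Or.inl (Or.inl hyo)
    have holt : o < y := lt_of_le_of_ne (B.min'_le _ hyB) (Ne.symm hyo)
    obtain ⟨x, hxB, harc1⟩ := block_pred hB hyB ⟨o, hoB, holt⟩
    have hyx : y = gOf P x := (gOf_eq harc1).symm
    by_cases hxo : x = o
    · subst hxo; exact Or.inl (Or.inr hyx)
    have hoxlt : o < x := lt_of_le_of_ne (B.min'_le _ hxB) (Ne.symm hxo)
    obtain ⟨w, hwB, harc2⟩ := block_pred hB hxB ⟨o, hoB, hoxlt⟩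
    have hx12 := trans_mem hy hP harc1 harc2
    have hxgw : x = gOf P w := (gOf_eq harc2).symm
    by_cases hwo : w = o
    · subst hwo
      rcases hx12 with rfl | rfl
      · exact Or.inr (Or.inl ⟨hxgw.symm, hyx⟩)
      · exact Or.inr (Or.inr ⟨Or.inr hxgw.symm, hyx⟩)
    have howlt : o < w := lt_of_le_of_ne (B.min'_le _ hwB) (Ne.symm hwo)
    obtain ⟨v, hvB, harc3⟩ := block_pred hB hwB ⟨o, hoB, howlt⟩
    have hw12 := trans_mem hy hP harc2 harc3
    have hwx : w < x := (mem_spArcs.1 harc2).2.1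
    have h12 := hy.h12
    have hwt1 : w = t1 ∧ x = t2 := by
      rcases hw12 with rfl | rfl <;> rcases hx12 with h | h <;> omega
    obtain ⟨rfl, rfl⟩ := hwt1
    have hwgv : w = gOf P v := (gOf_eq harc3).symm
    by_cases hvo : v = o
    · subst hvo
      exact Or.inr (Or.inr ⟨Or.inl ⟨hwgv.symm, hxgw.symm⟩, hyx⟩)
    have hovlt : o < v := lt_of_le_of_ne (B.min'_le _ hvB) (Ne.symm hvo)
    obtain ⟨u, huB, harc4⟩ := block_pred hB hvB ⟨o, hoB, hovlt⟩
    have hv12 := trans_mem hy hP harc3 harc4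
    have hvw : v < w := (mem_spArcs.1 harc3).2.1
    exfalso
    rcases hv12 with rfl | rfl <;> omega
  · -- chain o ⊆ B
    intro y hy'
    rw [mem_chainF] at hy'
    have hgoB : gOf P o ∈ B := snd_in_block hB (arc_of_mem_L hy hP hoL) hoB
    rcases hy' with (rfl | rfl) | (⟨he1, rfl⟩ | ⟨hc, rfl⟩)
    · exact hoB
    · exact hgoB
    · rw [he1] at hgoB
      exact snd_in_block hB (arc_of_mem_L hy hP ht1L) hgoB
    · have ht2B : t2 ∈ B := by
        rcases hc with ⟨he1, he2⟩ | he3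
        · rw [he1] at hgoB
          have := snd_in_block hB (arc_of_mem_L hy hP ht1L) hgoB
          rwa [he2] at this
        · rwa [he3] at hgoB
      exact snd_in_block hB (arc_of_mem_L hy hP ht2L) ht2B

lemma PofG_gOf (hy : GoodLR N t1 t2 L R) (hP : Pcond L R P) (hgc : Gcond L R (gOf P)) :
    PofG hy hgc = P := by
  have hparts : (PofG hy hgc).parts = P.parts := by
    ext B
    rw [parts_PofG]
    constructor
    · intro hBmem
      obtain ⟨o, ho, rfl⟩ := Finset.mem_image.1 hBmem
      have hoL := (Finset.mem_sdiff.1 ho).1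
      obtain ⟨B', hB'⟩ := (P.existsUnique_mem (L_sub hy hoL)).exists
      obtain ⟨o', ho', hBeq⟩ := part_eq_chain hy hP hB'.1
      have hoo : o = o' := by
        by_contra hne
        have hdisj := chainF_disj hy hgc ho ho' hne
        have h1 : o ∈ chainF t1 t2 (gOf P) o := (mem_chainF _ _ _ _ _).2 (Or.inl (Or.inl rfl))
        have h2 : o ∈ chainF t1 t2 (gOf P) o' := hBeq ▸ hB'.2
        exact Finset.disjoint_left.1 hdisj h1 h2
      rw [hoo, ← hBeq]
      exact hB'.1
    · intro hBmem
      obtain ⟨o, ho, hBeq⟩ := part_eq_chain hy hP hBmem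
      rw [hBeq]
      exact Finset.mem_image_of_mem _ ho
  exact Finpartition.ext hparts

lemma gOf_PofG (hy : GoodLR N t1 t2 L R) (hg : Gcond L R g) :
    gOf (PofG hy hg) = g := by
  funext x
  by_cases hx : x ∈ L
  · exact gOf_eq ((mem_spArcs_PofG hy hg).2 ⟨hx, rfl⟩)
  · rw [(hg.2.1 x hx)]
    apply gOf_zero
    rintro ⟨b, hb⟩
    exact hx ((mem_spArcs_PofG hy hg).1 hb).1

end Pside

lemma card_Pcond_eq (hy : GoodLR N t1 t2 L R) :
    Nat.card {P : Finpartition (Finset.Icc (1:ℕ) N) // Pcond L R P}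
      = Nat.card {g : ℕ → ℕ // Gcond L R g} := by
  apply Nat.card_congr
  exact {
    toFun := fun P => ⟨gOf P.1, Gcond_gOf hy P.2⟩
    invFun := fun g => ⟨PofG hy g.2, Pcond_PofG hy g.2⟩
    left_inv := fun P => Subtype.ext (PofG_gOf hy P.2 (Gcond_gOf hy P.2))
    right_inv := fun g => Subtype.ext (gOf_PofG hy g.2) }

end WithHyp
end Abstract

section Concrete

def idxL (n k j x : ℕ) : ℕ := if n+2*k+2 ≤ x then n+2*k+j+2 - x else n+k+j+2 - x

variable {n k j : ℕ}

lemma mem_Lset {x : ℕ} : x ∈ Lset n k j ↔ (1 ≤ x ∧ x ≤ n+k+1) ∨ (n+2*k+2 ≤ x ∧ x ≤ n+2*k+j+2) := by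
  simp [Lset, Finset.mem_union, Finset.mem_Icc]

lemma mem_Rset {x : ℕ} : x ∈ Rset n k j ↔
    (n+k+1 ≤ x ∧ x ≤ n+2*k+1) ∨ (n+2*k+j+2 ≤ x ∧ x ≤ 2*(n+k+j)+2) := by
  simp [Rset, Finset.mem_union, Finset.mem_Icc]

lemma goodLR_concrete (n k j : ℕ) (hn : 1 ≤ n) :
    GoodLR (2*(n+k+j)+2) (n+k+1) (n+2*k+j+2) (Lset n k j) (Rset n k j) := by
  constructor
  · ext x
    simp only [Finset.mem_union, mem_Lset, mem_Rset, Finset.mem_Icc]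
    omega
  · ext x
    simp only [Finset.mem_inter, mem_Lset, mem_Rset, Finset.mem_insert, Finset.mem_singleton]
    omega
  · omega
  · intro x hx; rw [mem_Lset] at hx; omega
  · intro x hx; rw [mem_Rset] at hx; omega
  · rw [Lset, Rset, Finset.card_union_of_disjoint, Finset.card_union_of_disjoint,
      Nat.card_Icc, Nat.card_Icc, Nat.card_Icc, Nat.card_Icc]
    · omega
    · simp only [Finset.disjoint_left, Finset.mem_Icc]; intro x h1 h2; omega
    · simp only [Finset.disjoint_left, Finset.mem_Icc]; intro x h1 h2; omega

lemma eL_mem {i : ℕ} (hi : i < n+k+j+2) : eL n k j i ∈ Lset n k j := by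
  rw [mem_Lset, eL]; split_ifs <;> omega

lemma idx_eL {i : ℕ} (hi : i < n+k+j+2) : idxL n k j (eL n k j i) = i := by
  rw [eL, idxL]; split_ifs <;> omega

lemma eL_idx {x : ℕ} (hx : x ∈ Lset n k j) : eL n k j (idxL n k j x) = x := by
  rw [mem_Lset] at hx; rw [eL, idxL]; split_ifs <;> omega

lemma idx_lt {x : ℕ} (hx : x ∈ Lset n k j) : idxL n k j x < n+k+j+2 := by
  rw [mem_Lset] at hx; rw [idxL]; split_ifs <;> omega

end Concrete

section Final

variable {n k j : ℕ}

lemma Aset_mono (i i' : Fin (n+k+j+2)) (h : i ≤ i') :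
    Aset n k j (i : ℕ) ⊆ Aset n k j (i' : ℕ) := by
  intro r hr
  rw [Aset, Finset.mem_filter] at hr ⊢
  refine ⟨hr.1, lt_of_le_of_lt ?_ hr.2⟩
  have : (i : ℕ) ≤ (i' : ℕ) := h
  rw [eL, eL]
  split_ifs <;> omega

lemma Pcond_iff (n k j : ℕ) (P : Finpartition (Finset.Icc (1 : ℕ) (2 * (n + k + j) + 2))) :
    ((∀ i ∈ Finset.Icc (1 : ℕ) (2 * (n + k + j) + 2), vtype P i ≠ VType.fixedpt) ∧
      (∀ i ∈ Finset.Icc (1 : ℕ) (n + k), vtype P i = VType.opener) ∧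
      vtype P (n + k + 1) = VType.transitory ∧
      (∀ i ∈ Finset.Icc (n + k + 2) (n + 2 * k + 1), vtype P i = VType.closer) ∧
      (∀ i ∈ Finset.Icc (n + 2 * k + 2) (n + 2 * k + j + 1), vtype P i = VType.opener) ∧
      vtype P (n + 2 * k + j + 2) = VType.transitory ∧
      (∀ i ∈ Finset.Icc (n + 2 * k + j + 3) (2 * (n + k + j) + 2),
        vtype P i = VType.closer)) ↔ Pcond (Lset n k j) (Rset n k j) P := by
  constructor
  · rintro ⟨h1, h2, h3, h4, h5, h6, h7⟩ i hi
    rw [Finset.mem_Icc] at hi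
    have hcases : (1 ≤ i ∧ i ≤ n+k) ∨ i = n+k+1 ∨ (n+k+2 ≤ i ∧ i ≤ n+2*k+1) ∨
        (n+2*k+2 ≤ i ∧ i ≤ n+2*k+j+1) ∨ i = n+2*k+j+2 ∨
        (n+2*k+j+3 ≤ i ∧ i ≤ 2*(n+k+j)+2) := by omega
    rcases hcases with hc | rfl | hc | hc | rfl | hc
    · have hL : i ∈ Lset n k j := mem_Lset.2 (by omega)
      have hR : i ∉ Rset n k j := fun h => by rw [mem_Rset] at h; omega
      rw [typeOf, if_pos hL, if_neg hR]
      exact h2 i (Finset.mem_Icc.2 (by omega))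
    · have hL : (n+k+1) ∈ Lset n k j := mem_Lset.2 (by omega)
      have hR : (n+k+1) ∈ Rset n k j := mem_Rset.2 (by omega)
      rw [typeOf, if_pos hL, if_pos hR]
      exact h3
    · have hL : i ∉ Lset n k j := fun h => by rw [mem_Lset] at h; omega
      rw [typeOf, if_neg hL]
      exact h4 i (Finset.mem_Icc.2 (by omega))
    · have hL : i ∈ Lset n k j := mem_Lset.2 (by omega)
      have hR : i ∉ Rset n k j := fun h => by rw [mem_Rset] at h; omega
      rw [typeOf, if_pos hL, if_neg hR]
      exact h5 i (Finset.mem_Icc.2 (by omega))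
    · have hL : (n+2*k+j+2) ∈ Lset n k j := mem_Lset.2 (by omega)
      have hR : (n+2*k+j+2) ∈ Rset n k j := mem_Rset.2 (by omega)
      rw [typeOf, if_pos hL, if_pos hR]
      exact h6
    · have hL : i ∉ Lset n k j := fun h => by rw [mem_Lset] at h; omega
      rw [typeOf, if_neg hL]
      exact h7 i (Finset.mem_Icc.2 (by omega))
  · intro hPc
    have hval : ∀ i, 1 ≤ i → i ≤ 2*(n+k+j)+2 → vtype P i = typeOf (Lset n k j) (Rset n k j) i :=
      fun i h1 h2 => hPc i (Finset.mem_Icc.2 ⟨h1, h2⟩)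
    refine ⟨fun i hi => ?_, fun i hi => ?_, ?_, fun i hi => ?_, fun i hi => ?_, ?_, fun i hi => ?_⟩
    · rw [Finset.mem_Icc] at hi
      have h := hval i (by omega) (by omega)
      rw [typeOf] at h
      split_ifs at h <;> rw [h] <;> decide
    · rw [Finset.mem_Icc] at hi
      have h := hval i (by omega) (by omega)
      rw [typeOf, if_pos (mem_Lset.2 (by omega)),
        if_neg (fun hh => by rw [mem_Rset] at hh; omega)] at h
      exact h
    · have h := hval (n+k+1) (by omega) (by omega)
      rw [typeOf, if_pos (mem_Lset.2 (by omega)), if_pos (mem_Rset.2 (by omega))] at h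
      exact h
    · rw [Finset.mem_Icc] at hi
      have h := hval i (by omega) (by omega)
      rw [typeOf, if_neg (fun hh => by rw [mem_Lset] at hh; omega)] at h
      exact h
    · rw [Finset.mem_Icc] at hi
      have h := hval i (by omega) (by omega)
      rw [typeOf, if_pos (mem_Lset.2 (by omega)),
        if_neg (fun hh => by rw [mem_Rset] at hh; omega)] at h
      exact h
    · have h := hval (n+2*k+j+2) (by omega) (by omega)
      rw [typeOf, if_pos (mem_Lset.2 (by omega)), if_pos (mem_Rset.2 (by omega))] at h
      exact h
    · rw [Finset.mem_Icc] at hi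
      have h := hval i (by omega) (by omega)
      rw [typeOf, if_neg (fun hh => by rw [mem_Lset] at hh; omega)] at h
      exact h

lemma card_G_eq (n k j : ℕ) :
    Nat.card {g : ℕ → ℕ // Gcond (Lset n k j) (Rset n k j) g}
      = ((Fintype.piFinset (fun i : Fin (n+k+j+2) => Aset n k j (i : ℕ))).filter
          (fun f => ∀ i i', f i = f i' → i = i')).card := by
  rw [← Nat.card_eq_finsetCard]
  apply Nat.card_congr
  refine {
    toFun := fun g => ⟨fun i => g.1 (eL n k j i), ?_⟩
    invFun := fun f => ⟨fun x => if h : x ∈ Lset n k j then f.1 ⟨idxL n k j x, idx_lt h⟩ else 0, ?_⟩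
    left_inv := ?_
    right_inv := ?_ }
  · obtain ⟨g, hg⟩ := g
    rw [Finset.mem_filter]
    constructor
    · rw [Fintype.mem_piFinset]
      intro i
      rw [Aset, Finset.mem_filter]
      exact ⟨(hg.1 _ (eL_mem i.2)).1, (hg.1 _ (eL_mem i.2)).2⟩
    · intro i i' h
      have heq : eL n k j i = eL n k j i' :=
        hg.2.2 (Finset.mem_coe.2 (eL_mem i.2)) (Finset.mem_coe.2 (eL_mem i'.2)) h
      have := congrArg (idxL n k j) heq
      rw [idx_eL i.2, idx_eL i'.2] at this
      exact Fin.ext this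
  · obtain ⟨f, hf⟩ := f
    rw [Finset.mem_filter, Fintype.mem_piFinset] at hf
    refine ⟨fun x hx => ?_, fun x hx => dif_neg hx, fun x hx x' hx' hh => ?_⟩
    · simp only [dif_pos hx]
      have := hf.1 ⟨idxL n k j x, idx_lt hx⟩
      rw [Aset, Finset.mem_filter] at this
      refine ⟨this.1, ?_⟩
      have h2 := this.2
      rwa [eL_idx hx] at h2
    · rw [Finset.mem_coe] at hx hx'
      simp only [dif_pos hx, dif_pos hx'] at hh
      have := hf.2 _ _ hh
      have h3 := congrArg (fun i : Fin (n+k+j+2) => eL n k j i) this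
      simpa [eL_idx hx, eL_idx hx'] using h3
  · rintro ⟨g, hg⟩
    apply Subtype.ext
    funext x
    by_cases hx : x ∈ Lset n k j
    · simp only [dif_pos hx]
      rw [eL_idx hx]
    · simp only [dif_neg hx]
      exact (hg.2.1 x hx).symm
  · rintro ⟨f, hf⟩
    apply Subtype.ext
    funext i
    have hmem : eL n k j (i : ℕ) ∈ Lset n k j := eL_mem i.2
    simp only [dif_pos hmem]
    congr 1
    exact Fin.ext (idx_eL i.2)

lemma final_arith (n k j : ℕ) :
    ((n+j) * (n+j).descFactorial j) * ((n+k) * Nat.factorial (n+k))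
      = n.factorial *
        ((n + k).choose k * k.factorial * k + (n + k).choose (k + 1) * (k + 1).factorial) *
        ((n + j).choose j * j.factorial * j + (n + j).choose (j + 1) * (j + 1).factorial) := by
  have hX : ∀ m : ℕ, (n + m).choose m * m.factorial * m + (n + m).choose (m + 1) * (m + 1).factorial
      = (n + m) * (n+m).descFactorial m := by
    intro m
    have h1 : (n+m).descFactorial m = m.factorial * (n+m).choose m :=
      Nat.descFactorial_eq_factorial_mul_choose _ _
    have h2 : (n+m).descFactorial (m+1) = (m+1).factorial * (n+m).choose (m+1) :=
      Nat.descFactorial_eq_factorial_mul_choose _ _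
    have h3 : (n+m).descFactorial (m+1) = (n + m - m) * (n+m).descFactorial m :=
      Nat.descFactorial_succ _ _
    have h4 : n + m - m = n := by omega
    rw [h4] at h3
    calc (n + m).choose m * m.factorial * m + (n + m).choose (m + 1) * (m + 1).factorial
        = (m.factorial * (n+m).choose m) * m + ((m+1).factorial * (n+m).choose (m+1)) := by ring
      _ = (n+m).descFactorial m * m + n * (n+m).descFactorial m := by rw [← h1, ← h2, h3]
      _ = (n + m) * (n+m).descFactorial m := by ring
  rw [hX k, hX j]
  have hfk : n.factorial * (n+k).descFactorial k = (n+k).factorial := by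
    have := Nat.factorial_mul_descFactorial (show k ≤ n + k by omega)
    have h4 : n + k - k = n := by omega
    rwa [h4] at this
  rw [← hfk]
  ring

end Final


theorem stmt11 (n k j : ℕ) (hn : 1 ≤ n) :
    Nat.card {P : Finpartition (Finset.Icc (1 : ℕ) (2 * (n + k + j) + 2)) //
      (∀ i ∈ Finset.Icc (1 : ℕ) (2 * (n + k + j) + 2), vtype P i ≠ VType.fixedpt) ∧
      (∀ i ∈ Finset.Icc (1 : ℕ) (n + k), vtype P i = VType.opener) ∧
      vtype P (n + k + 1) = VType.transitory ∧
      (∀ i ∈ Finset.Icc (n + k + 2) (n + 2 * k + 1), vtype P i = VType.closer) ∧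
      (∀ i ∈ Finset.Icc (n + 2 * k + 2) (n + 2 * k + j + 1), vtype P i = VType.opener) ∧
      vtype P (n + 2 * k + j + 2) = VType.transitory ∧
      (∀ i ∈ Finset.Icc (n + 2 * k + j + 3) (2 * (n + k + j) + 2),
        vtype P i = VType.closer)} =
    n.factorial *
      ((n + k).choose k * k.factorial * k + (n + k).choose (k + 1) * (k + 1).factorial) *
      ((n + j).choose j * j.factorial * j + (n + j).choose (j + 1) * (j + 1).factorial) := by
  calc Nat.card {P : Finpartition (Finset.Icc (1 : ℕ) (2 * (n + k + j) + 2)) //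
      (∀ i ∈ Finset.Icc (1 : ℕ) (2 * (n + k + j) + 2), vtype P i ≠ VType.fixedpt) ∧
      (∀ i ∈ Finset.Icc (1 : ℕ) (n + k), vtype P i = VType.opener) ∧
      vtype P (n + k + 1) = VType.transitory ∧
      (∀ i ∈ Finset.Icc (n + k + 2) (n + 2 * k + 1), vtype P i = VType.closer) ∧
      (∀ i ∈ Finset.Icc (n + 2 * k + 2) (n + 2 * k + j + 1), vtype P i = VType.opener) ∧
      vtype P (n + 2 * k + j + 2) = VType.transitory ∧
      (∀ i ∈ Finset.Icc (n + 2 * k + j + 3) (2 * (n + k + j) + 2),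
        vtype P i = VType.closer)}
      = Nat.card {P : Finpartition (Finset.Icc (1 : ℕ) (2 * (n + k + j) + 2)) //
          Pcond (Lset n k j) (Rset n k j) P} :=
        Nat.card_congr (Equiv.subtypeEquivRight (fun P => Pcond_iff n k j P))
    _ = Nat.card {g : ℕ → ℕ // Gcond (Lset n k j) (Rset n k j) g} :=
        card_Pcond_eq (goodLR_concrete n k j hn)
    _ = ((Fintype.piFinset (fun i : Fin (n+k+j+2) => Aset n k j (i : ℕ))).filter
          (fun f => ∀ i i', f i = f i' → i = i')).card := card_G_eq n k j
    _ = ∏ i : Fin (n+k+j+2), ((Aset n k j (i : ℕ)).card - (i : ℕ)) :=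
        count_nested _ _ Aset_mono
    _ = ((n+j) * (n+j).descFactorial j) * ((n+k) * Nat.factorial (n+k)) := prod_Aset n k j
    _ = _ := final_arith n k j
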